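/- arXiv:1103.4063 — 2 statements merged into one kernel-verified Lean document; each statement's English description precedes it below -/
import Mathlib

section
/- Let ω : ℤ → ℝ^{>0} be a weight satisfying ω(k) ≥ C(1 + |k|) for all k ∈ ℤ and some constant C > 0. Then the linear functional D : ℓ¹_ω(ℤ) → ℂ defined by D(f) = Σ_{k∈ℤ} k·f(k) is bounded, and it is a point derivation at the augmentation character ε(f) = Σ_k f(k): D(f * g) = D(f)ε(g) + ε(f)D(g) for all f, g ∈ ℓ¹_ω(ℤ). Consequently the closure of I² is strictly contained in I, where I = ker ε, i.e. the one-point set corresponding to ε is not a set of spectral synthesis for ℓ¹_ω(ℤ). -/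
private lemma key_summable (ω : ℤ → ℝ) (C : ℝ) (hC : 0 < C)
    (hbd : ∀ k : ℤ, C * (1 + |(k : ℝ)|) ≤ ω k) (f : ℤ → ℂ)
    (hf : Summable (fun k => ‖f k‖ * ω k)) :
    Summable (fun k : ℤ => (1 + |(k : ℝ)|) * ‖f k‖) := by
  apply Summable.of_nonneg_of_le (fun k => by positivity)
    (f := fun k => C⁻¹ * (‖f k‖ * ω k))
  · intro k
    rw [mul_comm, inv_mul_eq_div, le_div_iff₀ hC]
    calc ‖f k‖ * (1 + |(k:ℝ)|) * C = ‖f k‖ * (C * (1 + |(k:ℝ)|)) := by ring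
    _ ≤ ‖f k‖ * ω k := mul_le_mul_of_nonneg_left (hbd k) (norm_nonneg _)
  · exact hf.mul_left _

private lemma norm_summable (f : ℤ → ℂ)
    (h : Summable (fun k : ℤ => (1 + |(k : ℝ)|) * ‖f k‖)) :
    Summable (fun k : ℤ => ‖f k‖) := by
  apply Summable.of_nonneg_of_le (fun k => norm_nonneg _) _ h
  intro k
  nlinarith [norm_nonneg (f k), abs_nonneg ((k:ℝ))]

private lemma knorm_summable (f : ℤ → ℂ)
    (h : Summable (fun k : ℤ => (1 + |(k : ℝ)|) * ‖f k‖)) :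
    Summable (fun k : ℤ => ‖(k : ℂ) * f k‖) := by
  apply Summable.of_nonneg_of_le (fun k => norm_nonneg _) _ h
  intro k
  rw [norm_mul, Complex.norm_intCast]
  nlinarith [norm_nonneg (f k), abs_nonneg ((k:ℝ))]

/-- the reindexing equivalence `(k, m) ↦ (k + m, k)` on `ℤ × ℤ` -/
private def shearEquiv : ℤ × ℤ ≃ ℤ × ℤ where
  toFun p := (p.1 + p.2, p.1)
  invFun q := (q.2, q.1 - q.2)
  left_inv p := by simp
  right_inv q := by simp

set_option maxHeartbeats 1000000 in
private lemma deriv_identity (f g : ℤ → ℂ)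
    (hf1 : Summable (fun k : ℤ => (1 + |(k : ℝ)|) * ‖f k‖))
    (hg1 : Summable (fun k : ℤ => (1 + |(k : ℝ)|) * ‖g k‖)) :
    (∑' (n : ℤ), (n : ℂ) * ∑' (k : ℤ), f k * g (n - k)) =
      (∑' (k : ℤ), (k : ℂ) * f k) * (∑' (k : ℤ), g k) +
        (∑' (k : ℤ), f k) * (∑' (k : ℤ), (k : ℂ) * g k) := by
  have hfn := norm_summable f hf1
  have hgn := norm_summable g hg1
  have hfk := knorm_summable f hf1
  have hgk := knorm_summable g hg1
  -- the big double sum is summable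
  have hbig : Summable (fun p : ℤ × ℤ => ((p.1 + p.2 : ℤ) : ℂ) * f p.1 * g p.2) := by
    apply Summable.of_norm
    apply Summable.of_nonneg_of_le (fun p => norm_nonneg _)
      (f := fun p : ℤ × ℤ => ‖(p.1 : ℂ) * f p.1‖ * ‖g p.2‖ + ‖f p.1‖ * ‖(p.2 : ℂ) * g p.2‖)
    · intro p
      have : ((p.1 + p.2 : ℤ) : ℂ) * f p.1 * g p.2 =
          (p.1 : ℂ) * f p.1 * g p.2 + f p.1 * ((p.2 : ℂ) * g p.2) := by
        push_cast; ring
      rw [this]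
      refine (norm_add_le _ _).trans (le_of_eq ?_)
      simp [norm_mul]
    · exact (hfk.mul_of_nonneg hgn (fun k => norm_nonneg _) (fun k => norm_nonneg _)).add
        (hfn.mul_of_nonneg hgk (fun k => norm_nonneg _) (fun k => norm_nonneg _))
  -- reindex via shearEquiv
  have hre : (∑' p : ℤ × ℤ, ((p.1 + p.2 : ℤ) : ℂ) * f p.1 * g p.2) =
      ∑' q : ℤ × ℤ, (q.1 : ℂ) * f q.2 * g (q.1 - q.2) := by
    rw [← shearEquiv.symm.tsum_eq (fun q : ℤ × ℤ => ((q.1 + q.2 : ℤ) : ℂ) * f q.1 * g q.2)]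
    apply tsum_congr
    intro q
    simp [shearEquiv]
  have hbig2 : Summable (fun q : ℤ × ℤ => (q.1 : ℂ) * f q.2 * g (q.1 - q.2)) := by
    have := (shearEquiv.symm.summable_iff
      (f := fun q : ℤ × ℤ => ((q.1 + q.2 : ℤ) : ℂ) * f q.1 * g q.2)).2 hbig
    convert this using 1
    funext q
    simp [shearEquiv]
  -- split left side
  have lhs_eq : (∑' p : ℤ × ℤ, ((p.1 + p.2 : ℤ) : ℂ) * f p.1 * g p.2) =
      (∑' (k : ℤ), (k : ℂ) * f k) * (∑' (k : ℤ), g k) +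
        (∑' (k : ℤ), f k) * (∑' (k : ℤ), (k : ℂ) * g k) := by
    rw [tsum_mul_tsum_of_summable_norm hfk hgn, tsum_mul_tsum_of_summable_norm hfn hgk]
    rw [← Summable.tsum_add (summable_mul_of_summable_norm hfk hgn)
      (summable_mul_of_summable_norm hfn hgk)]
    apply tsum_congr
    intro p
    push_cast
    ring
  rw [← lhs_eq, hre, Summable.tsum_prod hbig2]
  apply tsum_congr
  intro n
  rw [← tsum_mul_left]
  apply tsum_congr
  intro k
  ring

/-- If a weight `ω` on `ℤ` dominates `C(1+|k|)`, then `D(f) = Σ k·f(k)` is a bounded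
point derivation at the augmentation character `ε(f) = Σ f(k)` of `ℓ¹_ω(ℤ)`:
`D(f*g) = D(f)ε(g) + ε(f)D(g)`, `D` vanishes on products of elements of `I = ker ε`
but not on all of `I`; hence `{1}` is not a set of spectral synthesis. -/
theorem stmt_14 (ω : ℤ → ℝ) (hpos : ∀ k, 0 < ω k)
    (hsub : ∀ m n : ℤ, ω (m + n) ≤ ω m * ω n)
    (C : ℝ) (hC : 0 < C) (hbd : ∀ k : ℤ, C * (1 + |(k : ℝ)|) ≤ ω k) :
    -- boundedness of D
    (∃ M : ℝ, 0 < M ∧ ∀ f : ℤ → ℂ, Summable (fun k => ‖f k‖ * ω k) →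
        Summable (fun k : ℤ => (k : ℂ) * f k) ∧
        ‖∑' (k : ℤ), (k : ℂ) * f k‖ ≤ M * ∑' (k : ℤ), ‖f k‖ * ω k) ∧
    -- derivation identity at the augmentation character
    (∀ f g : ℤ → ℂ, Summable (fun k => ‖f k‖ * ω k) →
        Summable (fun k => ‖g k‖ * ω k) →
        (∑' (n : ℤ), (n : ℂ) * ∑' (k : ℤ), f k * g (n - k)) =
          (∑' (k : ℤ), (k : ℂ) * f k) * (∑' (k : ℤ), g k) +
            (∑' (k : ℤ), f k) * (∑' (k : ℤ), (k : ℂ) * g k)) ∧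
    -- D vanishes on convolution products of elements of I = ker ε ...
    (∀ f g : ℤ → ℂ, Summable (fun k => ‖f k‖ * ω k) →
        Summable (fun k => ‖g k‖ * ω k) →
        (∑' (k : ℤ), f k) = 0 → (∑' (k : ℤ), g k) = 0 →
        (∑' (n : ℤ), (n : ℂ) * ∑' (k : ℤ), f k * g (n - k)) = 0) ∧
    -- ... but not on all of I: so the closure of I² is strictly inside I
    (∃ f : ℤ → ℂ, Summable (fun k => ‖f k‖ * ω k) ∧ (∑' (k : ℤ), f k) = 0 ∧
        (∑' (k : ℤ), (k : ℂ) * f k) ≠ 0) := by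
  refine ⟨⟨C⁻¹, inv_pos.2 hC, ?_⟩, ?_, ?_, ?_⟩
  · -- boundedness
    intro f hf
    have h1 := key_summable ω C hC hbd f hf
    have hk := knorm_summable f h1
    have hle : ∀ k : ℤ, ‖(k : ℂ) * f k‖ ≤ C⁻¹ * (‖f k‖ * ω k) := by
      intro k
      rw [norm_mul, Complex.norm_intCast]
      have hb := hbd k
      have h2 : C * (|(k:ℝ)| * ‖f k‖) ≤ ‖f k‖ * ω k := by
        nlinarith [norm_nonneg (f k), abs_nonneg ((k:ℝ))]
      calc |(k:ℝ)| * ‖f k‖ = C⁻¹ * (C * (|(k:ℝ)| * ‖f k‖)) := by field_simp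
      _ ≤ C⁻¹ * (‖f k‖ * ω k) := mul_le_mul_of_nonneg_left h2 (inv_pos.2 hC).le
    refine ⟨hk.of_norm, ?_⟩
    calc ‖∑' (k : ℤ), (k : ℂ) * f k‖ ≤ ∑' (k : ℤ), ‖(k : ℂ) * f k‖ :=
          norm_tsum_le_tsum_norm hk
    _ ≤ ∑' (k : ℤ), C⁻¹ * (‖f k‖ * ω k) := Summable.tsum_le_tsum hle hk (hf.mul_left _)
    _ = C⁻¹ * ∑' (k : ℤ), ‖f k‖ * ω k := tsum_mul_left
  · -- derivation identity
    intro f g hf hg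
    exact deriv_identity f g (key_summable ω C hC hbd f hf) (key_summable ω C hC hbd g hg)
  · -- vanishes on I²
    intro f g hf hg hf0 hg0
    rw [deriv_identity f g (key_summable ω C hC hbd f hf) (key_summable ω C hC hbd g hg),
      hf0, hg0, mul_zero, zero_mul, add_zero]
  · -- counterexample f = δ₁ - δ₀
    classical
    refine ⟨fun k => if k = 1 then 1 else if k = 0 then -1 else 0, ?_, ?_, ?_⟩
    · apply summable_of_ne_finset_zero (s := {0, 1})
      intro k hk
      simp only [Finset.mem_insert, Finset.mem_singleton, not_or] at hk
      simp [hk.1, hk.2]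
    · rw [tsum_eq_sum (s := {0, 1}) (by
        intro k hk
        simp only [Finset.mem_insert, Finset.mem_singleton, not_or] at hk
        simp [hk.1, hk.2])]
      norm_num
    · rw [tsum_eq_sum (s := {0, 1}) (by
        intro k hk
        simp only [Finset.mem_insert, Finset.mem_singleton, not_or] at hk
        simp [hk.1, hk.2])]
      norm_num
end

section
/- Let m ≥ 1 and let ω : ℕ^m → ℝ be a function with ω(μ) ≥ 1 for all μ, submultiplicative in the sense ω(μ + ν) ≤ ω(μ)ω(ν). Suppose there exist ρ > 1 and, for each n ≥ 1, an element μ_n ∈ ℕ^m with |μ_n| := Σ_j (μ_n)_j = n and ω(μ_n) ≥ ρ^n. Then there exists an index j ∈ {1,...,m} such that lim_{k→∞} ω(k·e_j)^{1/k} ≥ ρ^{1/m} > 1, where e_j is the j-th standard basis vector. -/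
open Filter Topology

private lemma omega_sum_le {m : ℕ} (ω : (Fin m → ℕ) → ℝ)
    (hω1 : ∀ μ, 1 ≤ ω μ)
    (hsub : ∀ μ ν, ω (μ + ν) ≤ ω μ * ω ν)
    (s : Finset (Fin m)) (f : Fin m → (Fin m → ℕ)) :
    ω (∑ i ∈ s, f i) ≤ ω 0 * ∏ i ∈ s, ω (f i) := by
  classical
  induction s using Finset.induction with
  | empty => simp
  | insert a s hx ih =>
    rw [Finset.sum_insert hx, Finset.prod_insert hx]
    calc ω (f a + ∑ i ∈ s, f i) ≤ ω (f a) * ω (∑ i ∈ s, f i) := hsub _ _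
      _ ≤ ω (f a) * (ω 0 * ∏ i ∈ s, ω (f i)) := by
          apply mul_le_mul_of_nonneg_left ih
          linarith [hω1 (f a)]
      _ = ω 0 * (ω (f a) * ∏ i ∈ s, ω (f i)) := by ring

/-- Pigeonhole for submultiplicative functions on `ℕ^m`: if `ω ≥ 1` is
submultiplicative and there are `μ_n` with `|μ_n|₁ = n` and `ω(μ_n) ≥ ρ^n` for some
`ρ > 1`, then for some coordinate direction `e_j` the limit
`lim_k ω(k·e_j)^{1/k}` is at least `ρ^{1/m} > 1`. -/
theorem stmt_15 (m : ℕ) (hm : 1 ≤ m) (ω : (Fin m → ℕ) → ℝ)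
    (hω1 : ∀ μ, 1 ≤ ω μ)
    (hsub : ∀ μ ν, ω (μ + ν) ≤ ω μ * ω ν)
    (ρ : ℝ) (hρ : 1 < ρ)
    (μ : ℕ → (Fin m → ℕ))
    (hlen : ∀ n, 1 ≤ n → (∑ j, μ n j) = n)
    (hgrow : ∀ n, 1 ≤ n → ρ ^ n ≤ ω (μ n)) :
    ∃ j : Fin m, ∃ L : ℝ,
      Filter.Tendsto (fun k : ℕ => (ω (Pi.single j k)) ^ ((k : ℝ)⁻¹))
        Filter.atTop (nhds L) ∧
      ρ ^ ((m : ℝ)⁻¹) ≤ L ∧ 1 < L := by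
  classical
  have hωpos : ∀ μ', (0:ℝ) < ω μ' := fun μ' => lt_of_lt_of_le zero_lt_one (hω1 μ')
  set u : Fin m → ℕ → ℝ := fun j k => Real.log (ω (Pi.single j k)) with hu
  have hu0 : ∀ j k, 0 ≤ u j k := fun j k => Real.log_nonneg (hω1 _)
  have hsubadd : ∀ j, Subadditive (u j) := by
    intro j a b
    have h1 : (Pi.single j (a + b) : Fin m → ℕ) = Pi.single j a + Pi.single j b :=
      by
      funext i
      simp only [Pi.single_apply, Pi.add_apply]
      split <;> simp
    have h2 : ω (Pi.single j (a + b)) ≤ ω (Pi.single j a) * ω (Pi.single j b) := by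
      rw [h1]; exact hsub _ _
    calc u j (a + b) ≤ Real.log (ω (Pi.single j a) * ω (Pi.single j b)) :=
          Real.log_le_log (hωpos _) h2
      _ = u j a + u j b := Real.log_mul (ne_of_gt (hωpos _)) (ne_of_gt (hωpos _))
  have hbdd : ∀ j, BddBelow (Set.range fun n : ℕ => u j n / n) := by
    intro j
    refine ⟨0, ?_⟩
    rintro x ⟨n, rfl⟩
    exact div_nonneg (hu0 j n) (Nat.cast_nonneg n)
  set lam : Fin m → ℝ := fun j => (hsubadd j).lim with hlam
  have htend : ∀ j, Tendsto (fun k : ℕ => u j k / k) atTop (𝓝 (lam j)) :=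
    fun j => (hsubadd j).tendsto_lim (hbdd j)
  have hlam0 : ∀ j, 0 ≤ lam j := by
    intro j
    refine ge_of_tendsto (htend j) ?_
    filter_upwards with k using div_nonneg (hu0 j k) (Nat.cast_nonneg k)
  -- pick the maximal lam
  obtain ⟨j₀, -, hj₀⟩ := Finset.exists_max_image Finset.univ lam
    ⟨⟨0, hm⟩, Finset.mem_univ _⟩
  have hj₀' : ∀ j, lam j ≤ lam j₀ := fun j => hj₀ j (Finset.mem_univ j)
  -- key claim : log ρ ≤ lam j₀
  have key : Real.log ρ ≤ lam j₀ := by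
    refine le_of_forall_pos_le_add ?_
    intro ε hε
    have hev : ∀ᶠ k : ℕ in atTop, ∀ j : Fin m, u j k / k ≤ lam j + ε := by
      rw [eventually_all]
      intro j
      exact (htend j).eventually (eventually_le_nhds (by linarith))
    obtain ⟨K₀, hK₀⟩ := hev.exists_forall_of_atTop
    set K : ℕ := max K₀ 1 with hKdef
    set C : ℝ := ∑ j : Fin m, ∑ k ∈ Finset.range K, u j k with hC
    have hC0 : 0 ≤ C := Finset.sum_nonneg fun j _ =>
      Finset.sum_nonneg fun k _ => hu0 j k
    have hterm : ∀ j : Fin m, ∀ k : ℕ, u j k ≤ (lam j + ε) * k + C := by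
      intro j k
      have hle0 : 0 ≤ lam j + ε := by linarith [hlam0 j]
      rcases lt_or_ge k K with hk | hk
      · have h1 : u j k ≤ C := by
          calc u j k ≤ ∑ k' ∈ Finset.range K, u j k' :=
                Finset.single_le_sum (fun i _ => hu0 j i) (Finset.mem_range.2 hk)
            _ ≤ C := Finset.single_le_sum
                (f := fun j => ∑ k' ∈ Finset.range K, u j k')
                (fun i _ => Finset.sum_nonneg fun k' _ => hu0 i k') (Finset.mem_univ j)
        have h2 : 0 ≤ (lam j + ε) * k := mul_nonneg hle0 (Nat.cast_nonneg k)
        linarith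
      · have hk0 : (0:ℝ) < k := by
          have : 1 ≤ k := le_trans (le_max_right _ _) hk
          exact_mod_cast this
        have h1 : u j k / k ≤ lam j + ε := hK₀ k (le_trans (le_max_left _ _) hk) j
        have h2 : u j k ≤ (lam j + ε) * k := by
          rw [div_le_iff₀ hk0] at h1
          linarith
        linarith
    set D : ℝ := Real.log (ω 0) + m * C with hD
    have hmain : ∀ n : ℕ, 1 ≤ n → Real.log ρ - (lam j₀ + ε) ≤ D / n := by
      intro n hn
      have hn0 : (0:ℝ) < n := by exact_mod_cast hn
      have step1 : (n : ℝ) * Real.log ρ ≤ Real.log (ω (μ n)) := by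
        calc (n : ℝ) * Real.log ρ = Real.log (ρ ^ n) := by rw [Real.log_pow]
          _ ≤ Real.log (ω (μ n)) :=
            Real.log_le_log (pow_pos (by linarith) n) (hgrow n hn)
      have hdecomp : μ n = ∑ j : Fin m, Pi.single j (μ n j) :=
        (Finset.univ_sum_single (μ n)).symm
      have step2 : Real.log (ω (μ n)) ≤ Real.log (ω 0) + ∑ j : Fin m, u j (μ n j) := by
        have h1 : ω (μ n) ≤ ω 0 * ∏ j : Fin m, ω (Pi.single j (μ n j)) := by
          have := omega_sum_le ω hω1 hsub Finset.univ (fun j => Pi.single j (μ n j))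
          rwa [← hdecomp] at this
        calc Real.log (ω (μ n)) ≤
              Real.log (ω 0 * ∏ j : Fin m, ω (Pi.single j (μ n j))) :=
              Real.log_le_log (hωpos _) h1
          _ = Real.log (ω 0) + Real.log (∏ j : Fin m, ω (Pi.single j (μ n j))) :=
              Real.log_mul (ne_of_gt (hωpos 0))
                (ne_of_gt (Finset.prod_pos fun j _ => hωpos _))
          _ = Real.log (ω 0) + ∑ j : Fin m, u j (μ n j) := by
              rw [Real.log_prod fun j _ => ne_of_gt (hωpos _)]
      have step3 : ∑ j : Fin m, u j (μ n j) ≤ (lam j₀ + ε) * n + m * C := by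
        calc ∑ j : Fin m, u j (μ n j)
            ≤ ∑ j : Fin m, ((lam j₀ + ε) * (μ n j) + C) := by
              apply Finset.sum_le_sum
              intro j _
              have h1 := hterm j (μ n j)
              have h2 : (lam j + ε) * (μ n j : ℝ) ≤ (lam j₀ + ε) * (μ n j : ℝ) :=
                mul_le_mul_of_nonneg_right (by linarith [hj₀' j]) (Nat.cast_nonneg _)
              linarith
          _ = (lam j₀ + ε) * (∑ j : Fin m, (μ n j : ℝ)) + m * C := by
              rw [Finset.sum_add_distrib, ← Finset.mul_sum]
              simp [Finset.card_univ]
          _ = (lam j₀ + ε) * n + m * C := by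
              congr 1
              congr 1
              rw [← Nat.cast_sum]
              exact_mod_cast congrArg (Nat.cast : ℕ → ℝ) (hlen n hn)
      have : (n : ℝ) * Real.log ρ ≤ (lam j₀ + ε) * n + D := by
        rw [hD]; linarith
      rw [le_div_iff₀ hn0]
      ring_nf
      ring_nf at this
      linarith
    have hDto : Tendsto (fun n : ℕ => D / n) atTop (𝓝 0) :=
      tendsto_const_div_atTop_nhds_zero_nat D
    have : Real.log ρ - (lam j₀ + ε) ≤ 0 := by
      refine ge_of_tendsto hDto ?_
      filter_upwards [eventually_ge_atTop 1] with n hn using hmain n hn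
    linarith
  -- conclude
  refine ⟨j₀, Real.exp (lam j₀), ?_, ?_, ?_⟩
  · have h1 : Tendsto (fun k : ℕ => Real.exp (u j₀ k / k)) atTop (𝓝 (Real.exp (lam j₀))) :=
      (Real.continuous_exp.tendsto _).comp (htend j₀)
    refine h1.congr ?_
    intro k
    rw [Real.rpow_def_of_pos (hωpos _), mul_comm, ← div_eq_inv_mul]
  · have h1 : ρ ^ ((m : ℝ)⁻¹) ≤ ρ := by
      nth_rewrite 2 [← Real.rpow_one ρ]
      apply Real.rpow_le_rpow_of_exponent_le hρ.le
      rw [inv_le_one_iff₀]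
      right
      exact_mod_cast hm
    calc ρ ^ ((m : ℝ)⁻¹) ≤ ρ := h1
      _ = Real.exp (Real.log ρ) := (Real.exp_log (by linarith)).symm
      _ ≤ Real.exp (lam j₀) := Real.exp_le_exp.2 key
  · calc (1:ℝ) < ρ := hρ
      _ = Real.exp (Real.log ρ) := (Real.exp_log (by linarith)).symm
      _ ≤ Real.exp (lam j₀) := Real.exp_le_exp.2 key
end
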